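/- arXiv:1001.2941 — 2 statements merged into one kernel-verified Lean document; each statement's English description precedes it below -/
import Mathlib

section
/- Let Ω ⊆ ℂ^n be open, F : Ω → ℂ^N holomorphic, W ⊆ Ω open with ‖F(q)‖ < 1 for all q ∈ W, and let p ∈ Ω ∩ ∂W with ‖F(p)‖ = 1. Fix v ∈ ℂ^n and suppose that g_N(F(q))(dF|_q v, dF|_q v) remains bounded as q → p within W. Then dF|_p v = 0, i.e., ∑_{ξ=1}^n (∂F_l/∂z_ξ)(p)·v_ξ = 0 for every component l = 1, …, N. -/
open Metric Set

lemma bergman_aux_continuousAt_fderiv_apply {E G : Type*} [NormedAddCommGroup E]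
    [NormedSpace ℂ E] [ProperSpace E] [NormedAddCommGroup G] [NormedSpace ℂ G]
    {Ω : Set E} (hΩ : IsOpen Ω) {f : E → G} (hf : DifferentiableOn ℂ f Ω)
    {p : E} (hp : p ∈ Ω) (v : E) :
    ContinuousAt (fun q => fderiv ℂ f q v) p := by
  obtain ⟨ε₀, hε₀, hball⟩ := Metric.isOpen_iff.1 hΩ p hp
  obtain ⟨r, hr⟩ : ∃ r : ℝ, r = ε₀ / (4 * (‖v‖ + 1)) := ⟨_, rfl⟩
  have hv1 : 0 < ‖v‖ + 1 := by positivity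
  have hrpos : 0 < r := by rw [hr]; positivity
  have hrv : r * ‖v‖ ≤ ε₀ / 4 := by
    rw [hr, div_mul_eq_mul_div, div_le_div_iff₀ (by positivity) (by norm_num)]
    nlinarith [norm_nonneg v]
  have hmem : ∀ q : E, dist q p ≤ ε₀ / 8 → ∀ t : ℂ, ‖t‖ ≤ r →
      q + t • v ∈ closedBall p (ε₀ / 2) := by
    intro q hq t ht
    rw [mem_closedBall, dist_eq_norm]
    have he : q + t • v - p = (q - p) + t • v := by abel
    rw [he]
    have h1 : ‖(q - p) + t • v‖ ≤ ‖q - p‖ + ‖t‖ * ‖v‖ := by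
      refine (norm_add_le _ _).trans ?_; rw [norm_smul]
    have h2 : ‖q - p‖ ≤ ε₀ / 8 := by rwa [← dist_eq_norm]
    have h3 : ‖t‖ * ‖v‖ ≤ r * ‖v‖ := mul_le_mul_of_nonneg_right ht (norm_nonneg v)
    nlinarith
  have hKsub : closedBall p (ε₀ / 2) ⊆ Ω := by
    refine subset_trans ?_ hball
    intro x hx
    rw [mem_closedBall] at hx; rw [mem_ball]; linarith
  have hline : ∀ (q : E) (t : ℂ), HasDerivAt (fun s : ℂ => q + s • v) v t := by
    intro q t
    simpa using ((hasDerivAt_id t).smul_const v).const_add q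
  have hderiv : ∀ q ∈ Ω, HasDerivAt (fun t : ℂ => f (q + t • v)) (fderiv ℂ f q v) 0 := by
    intro q hq
    have hfd : HasFDerivAt f (fderiv ℂ f q) q :=
      (hf.differentiableAt (hΩ.mem_nhds hq)).hasFDerivAt
    have := hfd.comp_hasDerivAt_of_eq (0:ℂ) (hline q 0) (by simp)
    simpa [Function.comp_def] using this
  have hK : IsCompact (closedBall p (ε₀ / 2)) := isCompact_closedBall p _
  have hucont : UniformContinuousOn f (closedBall p (ε₀ / 2)) :=
    hK.uniformContinuousOn_of_continuous ((hf.continuousOn).mono hKsub)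
  rw [Metric.continuousAt_iff]
  intro ε' hε'
  obtain ⟨ε, hε⟩ : ∃ ε : ℝ, ε = ε' * r / 4 := ⟨_, rfl⟩
  have hεpos : 0 < ε := by rw [hε]; positivity
  rw [Metric.uniformContinuousOn_iff] at hucont
  obtain ⟨δ, hδ, hδf⟩ := hucont ε hεpos
  refine ⟨min δ (ε₀ / 8), by positivity, ?_⟩
  intro q hq
  have hq8 : dist q p ≤ ε₀ / 8 := le_of_lt (lt_of_lt_of_le hq (min_le_right _ _))
  have hqδ : dist q p < δ := lt_of_lt_of_le hq (min_le_left _ _)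
  have hp8 : dist p p ≤ ε₀ / 8 := by simp; positivity
  have hmemq := hmem q hq8
  have hmemp := hmem p hp8
  have hqΩ : q ∈ Ω := hKsub (by simpa using hmemq 0 (by simpa using hrpos.le))
  set gq : ℂ → G := fun t => f (q + t • v) - f (p + t • v) with hgq
  have hclose : ∀ t : ℂ, ‖t‖ ≤ r → dist (f (q + t • v)) (f (p + t • v)) < ε := by
    intro t ht
    refine hδf _ (hmemq t ht) _ (hmemp t ht) ?_
    rwa [dist_add_right]
  have hdiff : DifferentiableOn ℂ gq (ball 0 r) := by
    intro t ht
    have htr : ‖t‖ ≤ r := le_of_lt (by simpa [mem_ball, dist_zero_right] using ht)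
    have h1 : DifferentiableAt ℂ (fun s : ℂ => f (q + s • v)) t := by
      have hfd : HasFDerivAt f (fderiv ℂ f (q + t • v)) (q + t • v) :=
        (hf.differentiableAt (hΩ.mem_nhds (hKsub (hmemq t htr)))).hasFDerivAt
      simpa [Function.comp_def] using (hfd.comp_hasDerivAt t (hline q t)).differentiableAt
    have h2 : DifferentiableAt ℂ (fun s : ℂ => f (p + s • v)) t := by
      have hfd : HasFDerivAt f (fderiv ℂ f (p + t • v)) (p + t • v) :=
        (hf.differentiableAt (hΩ.mem_nhds (hKsub (hmemp t htr)))).hasFDerivAt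
      simpa [Function.comp_def] using (hfd.comp_hasDerivAt t (hline p t)).differentiableAt
    exact (h1.sub h2).differentiableWithinAt
  have hmaps : MapsTo gq (ball 0 r) (ball (gq 0) (3 * ε)) := by
    intro t ht
    have htr : ‖t‖ ≤ r := le_of_lt (by simpa [mem_ball, dist_zero_right] using ht)
    rw [mem_ball, dist_eq_norm]
    have e1 := hclose t htr
    have e2 := hclose 0 (by simpa using hrpos.le)
    have key : gq t - gq 0
        = (f (q + t • v) - f (p + t • v)) - (f (q + (0:ℂ) • v) - f (p + (0:ℂ) • v)) := by simp only [hgq]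
    rw [key]
    have : ‖(f (q + t • v) - f (p + t • v)) - (f (q + (0:ℂ) • v) - f (p + (0:ℂ) • v))‖
        ≤ ‖f (q + t • v) - f (p + t • v)‖ + ‖f (q + (0:ℂ) • v) - f (p + (0:ℂ) • v)‖ :=
      norm_sub_le _ _
    rw [dist_eq_norm] at e1 e2
    refine lt_of_le_of_lt this ?_
    linarith
  have hbound : ‖deriv gq 0‖ ≤ 3 * ε / r :=
    Complex.norm_deriv_le_div_of_mapsTo_ball hdiff (hmaps.mono_right ball_subset_closedBall) hrpos
  have hder : HasDerivAt gq (fderiv ℂ f q v - fderiv ℂ f p v) 0 :=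
    (hderiv q hqΩ).sub (hderiv p hp)
  rw [hder.deriv] at hbound
  rw [dist_eq_norm]
  have h34 : 3 * ε / r = 3 * ε' / 4 := by
    rw [hε]; field_simp
  rw [h34] at hbound
  linarith

noncomputable def bergman {N : ℕ} (z v : EuclideanSpace ℂ (Fin N)) : ℝ :=
  ((1 - ‖z‖ ^ 2) * ‖v‖ ^ 2 +
      ‖∑ j, v j * (starRingEnd ℂ) (z j)‖ ^ 2) / (1 - ‖z‖ ^ 2) ^ 2

lemma bergman_lower {N : ℕ} (z w : EuclideanSpace ℂ (Fin N)) (hz : ‖z‖ < 1) :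
    ‖w‖ ^ 2 ≤ (1 - ‖z‖ ^ 2) * bergman z w := by
  have hA : 0 < 1 - ‖z‖ ^ 2 := by nlinarith [norm_nonneg z]
  set s := ‖∑ j, w j * (starRingEnd ℂ) (z j)‖ ^ 2 with hs
  have hs0 : 0 ≤ s := sq_nonneg _
  unfold bergman
  rw [show (1 - ‖z‖ ^ 2) * (((1 - ‖z‖ ^ 2) * ‖w‖ ^ 2 + s) / (1 - ‖z‖ ^ 2) ^ 2)
      = ‖w‖ ^ 2 + s / (1 - ‖z‖ ^ 2) by field_simp]
  have : 0 ≤ s / (1 - ‖z‖ ^ 2) := div_nonneg hs0 hA.le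
  linarith

/-- if `F` is holomorphic on an open `Ω`, `‖F‖ < 1` on an open `W ⊆ Ω`,
`p ∈ Ω ∩ ∂W` with `‖F(p)‖ = 1`, and the pullback Bergman metric
`g_N(F(q))(dF|_q v, dF|_q v)` stays bounded as `q → p` within `W`,
then `dF|_p v = 0`. -/
theorem derivative_vanishes_at_boundary_point {n N : ℕ}
    (Ω W : Set (EuclideanSpace ℂ (Fin n))) (hΩopen : IsOpen Ω) (hWopen : IsOpen W)
    (hWΩ : W ⊆ Ω)
    (F : EuclideanSpace ℂ (Fin n) → EuclideanSpace ℂ (Fin N))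
    (hF : DifferentiableOn ℂ F Ω)
    (hlt : ∀ q ∈ W, ‖F q‖ < 1)
    (p : EuclideanSpace ℂ (Fin n)) (hp : p ∈ Ω ∩ frontier W) (hFp : ‖F p‖ = 1)
    (v : EuclideanSpace ℂ (Fin n))
    (hbd : ∃ C : ℝ, ∀ᶠ q in nhdsWithin p W, bergman (F q) (fderiv ℂ F q v) ≤ C) :
    fderiv ℂ F p v = 0 := by
  obtain ⟨C, hC⟩ := hbd
  have hpΩ : p ∈ Ω := hp.1
  have hne : (nhdsWithin p W).NeBot := by
    rw [← mem_closure_iff_nhdsWithin_neBot]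
    exact hp.2.1
  have hcont : ContinuousAt (fun q => fderiv ℂ F q v) p :=
    bergman_aux_continuousAt_fderiv_apply hΩopen hF hpΩ v
  have htend1 : Filter.Tendsto (fun q => ‖fderiv ℂ F q v‖ ^ 2) (nhdsWithin p W)
      (nhds (‖fderiv ℂ F p v‖ ^ 2)) :=
    ((hcont.norm.pow 2).tendsto).mono_left nhdsWithin_le_nhds
  have hFcont : ContinuousAt F p := (hF.differentiableAt (hΩopen.mem_nhds hpΩ)).continuousAt
  have htendA : Filter.Tendsto (fun q => C * (1 - ‖F q‖ ^ 2)) (nhdsWithin p W) (nhds 0) := by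
    have h1 : Filter.Tendsto (fun q => C * (1 - ‖F q‖ ^ 2)) (nhds p)
        (nhds (C * (1 - ‖F p‖ ^ 2))) :=
      tendsto_const_nhds.mul (tendsto_const_nhds.sub ((hFcont.norm.pow 2).tendsto))
    rw [hFp] at h1
    simpa using h1.mono_left nhdsWithin_le_nhds
  have hsq : ∀ᶠ q in nhdsWithin p W, ‖fderiv ℂ F q v‖ ^ 2 ≤ C * (1 - ‖F q‖ ^ 2) := by
    filter_upwards [hC, self_mem_nhdsWithin] with q hq hqW
    have hz := hlt q hqW
    have hA : 0 < 1 - ‖F q‖ ^ 2 := by nlinarith [norm_nonneg (F q)]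
    calc ‖fderiv ℂ F q v‖ ^ 2 ≤ (1 - ‖F q‖ ^ 2) * bergman (F q) (fderiv ℂ F q v) :=
          bergman_lower _ _ hz
      _ ≤ (1 - ‖F q‖ ^ 2) * C := by nlinarith
      _ = C * (1 - ‖F q‖ ^ 2) := mul_comm _ _
  have h0 : ∀ᶠ q in nhdsWithin p W, (0:ℝ) ≤ ‖fderiv ℂ F q v‖ ^ 2 := by
    filter_upwards with q; positivity
  have htend0 : Filter.Tendsto (fun q => ‖fderiv ℂ F q v‖ ^ 2) (nhdsWithin p W) (nhds 0) :=
    squeeze_zero' h0 hsq htendA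
  have huniq := tendsto_nhds_unique htend1 htend0
  have hn : ‖fderiv ℂ F p v‖ = 0 := by nlinarith [norm_nonneg (fderiv ℂ F p v)]
  simpa using hn
end

section
/- Let n ≥ 2, let Ω ⊆ ℂ^n be open, and let S ⊆ Ω be a connected smooth real-analytic real hypersurface. Let F : Ω → ℂ^N be holomorphic such that ‖F(p)‖ = 1 for every p ∈ S and the full (real) differential of the function z ↦ ‖F(z)‖² vanishes at every point of S. Then there exists a point p ∈ S at which the complex derivative dF|_p : ℂ^n → ℂ^N is not injective; in particular, F cannot be a holomorphic immersion on any neighborhood of S. -/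
/-- `S` is a smooth real-analytic real hypersurface in `Ω`: a real-analytic submanifold of
real codimension 1, given locally as the regular zero set of a real-analytic defining
function. -/
def IsRealAnalyticHypersurface {n : ℕ} (Ω S : Set (EuclideanSpace ℂ (Fin n))) : Prop :=
  S ⊆ Ω ∧ ∀ p ∈ S, ∃ O : Set (EuclideanSpace ℂ (Fin n)), IsOpen O ∧ p ∈ O ∧ O ⊆ Ω ∧
    ∃ ρ : EuclideanSpace ℂ (Fin n) → ℝ, AnalyticOnNhd ℝ ρ O ∧
      (∀ q ∈ O, fderiv ℝ ρ q ≠ 0) ∧ S ∩ O = {q ∈ O | ρ q = 0}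


open Filter Metric

/-- MVT: if `f 0 = 0`, `f' 0 = 0` and `f'` has derivative `A` at `0`, then `|f t| ≤ (|A|+ε) t²`. -/
lemma quadMVT {f f' : ℝ → ℝ} (hf : ∀ᶠ t in nhds (0:ℝ), HasDerivAt f (f' t) t)
    (h0 : f 0 = 0) (h'0 : f' 0 = 0) {A : ℝ} (hA : HasDerivAt f' A 0)
    {ε : ℝ} (hε : 0 < ε) :
    ∀ᶠ t in nhds (0:ℝ), |f t| ≤ (|A| + ε) * t ^ 2 := by
  have h1 : ∀ᶠ s in nhds (0:ℝ), |f' s| ≤ (|A| + ε) * |s| := by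
    have h2 := hA.isLittleO.def hε
    filter_upwards [h2] with s hs
    have : |f' s - f' 0 - (s - 0) • A| ≤ ε * |s - 0| := by simpa [Real.norm_eq_abs] using hs
    rw [h'0] at this
    simp only [sub_zero, smul_eq_mul] at this
    calc |f' s| = |(f' s - s * A) + s * A| := by ring_nf
    _ ≤ |f' s - s * A| + |s * A| := abs_add_le _ _
    _ ≤ ε * |s| + |s| * |A| := by rw [abs_mul]; linarith
    _ = (|A| + ε) * |s| := by ring
  obtain ⟨δ, hδ, hball⟩ := Metric.eventually_nhds_iff.1 (hf.and h1)
  rw [Metric.eventually_nhds_iff]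
  refine ⟨δ, hδ, fun t ht => ?_⟩
  have habs : ∀ x ∈ Set.Icc (-|t|) |t|, dist x 0 < δ := by
    intro x hx
    rw [Real.dist_eq, sub_zero]
    have : |x| ≤ |t| := abs_le.2 ⟨hx.1, hx.2⟩
    calc |x| ≤ |t| := this
    _ = dist t 0 := by rw [Real.dist_eq, sub_zero]
    _ < δ := ht
  have hderiv : ∀ x ∈ Set.Icc (-|t|) |t|,
      HasDerivWithinAt f (f' x) (Set.Icc (-|t|) |t|) x :=
    fun x hx => ((hball (habs x hx)).1).hasDerivWithinAt
  have hbound : ∀ x ∈ Set.Icc (-|t|) |t|, ‖f' x‖ ≤ (|A| + ε) * |t| := by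
    intro x hx
    have h3 := (hball (habs x hx)).2
    have : |x| ≤ |t| := abs_le.2 ⟨hx.1, hx.2⟩
    rw [Real.norm_eq_abs]
    calc |f' x| ≤ (|A| + ε) * |x| := h3
    _ ≤ (|A| + ε) * |t| := by
        have : (0:ℝ) ≤ |A| + ε := by positivity
        nlinarith
  have h0mem : (0:ℝ) ∈ Set.Icc (-|t|) |t| := by
    constructor <;> simp [abs_nonneg, neg_nonpos]
  have htmem : t ∈ Set.Icc (-|t|) |t| := by
    constructor
    · exact neg_abs_le t
    · exact le_abs_self t
  have := (convex_Icc (-|t|) |t|).norm_image_sub_le_of_norm_hasDerivWithin_le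
    hderiv hbound h0mem htmem
  rw [h0, sub_zero, Real.norm_eq_abs, Real.norm_eq_abs, sub_zero] at this
  calc |f t| ≤ (|A| + ε) * |t| * |t| := this
  _ = (|A| + ε) * t ^ 2 := by rw [mul_assoc, ← abs_mul, ← sq, abs_sq]

/-- An analytic function with `f 0 = 0`, `f' 0 = 0` is `O(t²)`. -/
lemma quadGrowth {f : ℝ → ℝ} (hf : AnalyticAt ℝ f 0) (h0 : f 0 = 0)
    (h1 : deriv f 0 = 0) :
    ∃ C > 0, ∀ᶠ t in nhds (0:ℝ), |f t| ≤ C * t ^ 2 := by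
  obtain ⟨s, hs, hfs⟩ := hf.exists_mem_nhds_analyticOnNhd
  obtain ⟨U, hUs, hUopen, h0U⟩ := _root_.mem_nhds_iff.1 hs
  have hfU : AnalyticOnNhd ℝ f U := hfs.mono hUs
  have hdU : AnalyticOnNhd ℝ (deriv f) U := hfU.deriv
  have hev : ∀ᶠ t in nhds (0:ℝ), HasDerivAt f (deriv f t) t := by
    filter_upwards [hUopen.mem_nhds h0U] with t ht
    exact ((hfU t ht).differentiableAt).hasDerivAt
  have hA : HasDerivAt (deriv f) (deriv (deriv f) 0) 0 :=
    ((hdU 0 h0U).differentiableAt).hasDerivAt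
  refine ⟨|deriv (deriv f) 0| + 1, by positivity, ?_⟩
  exact quadMVT hev h0 h1 hA one_pos

set_option maxHeartbeats 2000000
open Filter Metric

/-- Near a point of an analytic hypersurface, a tangent line can be corrected by `O(t²)`
to land on the hypersurface. -/
lemma curveToS {n : ℕ} {O : Set (EuclideanSpace ℂ (Fin n))} (hO : IsOpen O)
    {ρ : EuclideanSpace ℂ (Fin n) → ℝ} (hρ : AnalyticOnNhd ℝ ρ O)
    {p : EuclideanSpace ℂ (Fin n)} (hp : p ∈ O) (hρp : ρ p = 0)
    {v e : EuclideanSpace ℂ (Fin n)} (hv : fderiv ℝ ρ p v = 0)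
    (he : fderiv ℝ ρ p e = 1) :
    ∃ C > 0, ∀ᶠ t in nhds (0:ℝ), ∃ q, q ∈ O ∧ ρ q = 0 ∧
      ‖p + t • v - q‖ ≤ C * t ^ 2 ∧ ‖q - p‖ ≤ C * (|t| + t ^ 2) := by
  have he0 : e ≠ 0 := by
    intro h; rw [h, map_zero] at he; exact one_ne_zero he.symm
  have hen : (0:ℝ) < ‖e‖ := norm_pos_iff.2 he0
  -- the function along the tangent line
  set τ : ℝ → ℝ := fun t => ρ (p + t • v) with hτdef
  have haff : ∀ t : ℝ, HasDerivAt (fun s : ℝ => p + s • v) v t := by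
    intro t
    have : HasDerivAt (fun s : ℝ => s • v) ((1:ℝ) • v) t := (hasDerivAt_id t).smul_const v
    simpa using this.const_add p
  have hτan : AnalyticAt ℝ τ 0 := by
    have h1 : AnalyticAt ℝ (fun s : ℝ => p + s • v) 0 := by
      have : AnalyticAt ℝ (fun s : ℝ => s • v) 0 :=
        ((ContinuousLinearMap.smulRight (1 : ℝ →L[ℝ] ℝ) v).analyticAt 0).congr
          (by filter_upwards with s; simp)
      exact analyticAt_const.add this
    have h2 : AnalyticAt ℝ ρ ((fun s : ℝ => p + s • v) 0) := by simpa using hρ p hp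
    have h3 := AnalyticAt.comp (g := ρ) (f := fun s : ℝ => p + s • v) h2 h1
    simpa [Function.comp_def] using h3
  have hτ0 : τ 0 = 0 := by simp [hτdef, hρp]
  have hτd : HasDerivAt τ 0 0 := by
    have hd : HasFDerivAt ρ (fderiv ℝ ρ p) ((fun s : ℝ => p + s • v) 0) := by
      simpa using ((hρ p hp).differentiableAt).hasFDerivAt
    have h1 : HasDerivAt τ ((fderiv ℝ ρ p) v) 0 := hd.comp_hasDerivAt 0 (haff 0)
    rwa [hv] at h1
  obtain ⟨C, hC, hCev⟩ := quadGrowth hτan hτ0 hτd.deriv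
  -- strict differentiability bound
  have hst : HasStrictFDerivAt ρ (fderiv ℝ ρ p) p := (hρ p hp).hasStrictFDerivAt
  have hlit := hst.isLittleO.def (show (0:ℝ) < 1/(2*‖e‖) by positivity)
  rw [nhds_prod_eq, Filter.eventually_prod_iff] at hlit
  obtain ⟨pa, hpa, pb, hpb, hpab⟩ := hlit
  obtain ⟨δ₁, hδ₁, hball₁⟩ := Metric.eventually_nhds_iff.1 hpa
  obtain ⟨δ₂, hδ₂, hball₂⟩ := Metric.eventually_nhds_iff.1 hpb
  obtain ⟨δ₃, hδ₃, hball₃⟩ : ∃ δ > 0, Metric.ball p δ ⊆ O :=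
    Metric.isOpen_iff.1 hO p hp
  set δ : ℝ := min (min δ₁ δ₂) δ₃ with hδdef
  have hδ : 0 < δ := by positivity
  refine ⟨4 * C * ‖e‖ + ‖v‖ + 1, by positivity, ?_⟩
  have hsmall : ∀ᶠ t in nhds (0:ℝ),
      |t| * ‖v‖ + 4 * C * t ^ 2 * ‖e‖ < δ := by
    have hcont : Continuous (fun t : ℝ => |t| * ‖v‖ + 4 * C * t ^ 2 * ‖e‖) := by
      continuity
    have h0 : Filter.Tendsto (fun t : ℝ => |t| * ‖v‖ + 4 * C * t ^ 2 * ‖e‖)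
        (nhds 0) (nhds 0) := by
      have := hcont.continuousAt (x := (0:ℝ))
      simpa [ContinuousAt] using this
    exact h0.eventually_lt_const hδ
  filter_upwards [hCev, hsmall] with t hCt hsm
  -- IVT construction
  set σ : ℝ := 4 * C * t ^ 2 with hσdef
  have hσ0 : 0 ≤ σ := by positivity
  have hmem : ∀ s : ℝ, |s| ≤ σ → p + t • v + s • e ∈ Metric.ball p δ := by
    intro s hs
    rw [Metric.mem_ball, dist_eq_norm]
    have heq : p + t • v + s • e - p = t • v + s • e := by abel
    rw [heq]
    have h1 : ‖t • v + s • e‖ ≤ |t| * ‖v‖ + |s| * ‖e‖ := by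
      refine (norm_add_le _ _).trans ?_
      rw [norm_smul, norm_smul, Real.norm_eq_abs, Real.norm_eq_abs]
    have h2 : |s| * ‖e‖ ≤ σ * ‖e‖ := mul_le_mul_of_nonneg_right hs hen.le
    calc ‖t • v + s • e‖ ≤ |t| * ‖v‖ + σ * ‖e‖ := by linarith
    _ = |t| * ‖v‖ + 4 * C * t ^ 2 * ‖e‖ := by rw [hσdef]
    _ < δ := hsm
  -- pointwise strict-derivative estimate
  have hest : ∀ s : ℝ, |s| ≤ σ →
      |ρ (p + t • v + s • e) - τ t - s| ≤ |s| / 2 := by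
    intro s hs
    have hmem1 : p + t • v + s • e ∈ Metric.ball p δ := hmem s hs
    have hmem2 : p + t • v ∈ Metric.ball p δ := by simpa using hmem 0 (by simpa using hσ0)
    have h1 : dist (p + t • v + s • e) p < δ₁ := by
      have := Metric.mem_ball.1 hmem1
      exact lt_of_lt_of_le this (by rw [hδdef]; exact (min_le_left _ _).trans (min_le_left _ _))
    have h2 : dist (p + t • v) p < δ₂ := by
      have := Metric.mem_ball.1 hmem2
      exact lt_of_lt_of_le this (by rw [hδdef]; exact (min_le_left _ _).trans (min_le_right _ _))
    have := hpab (hball₁ h1) (hball₂ h2)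
    simp only [Real.norm_eq_abs] at this
    have harg : p + t • v + s • e - (p + t • v) = s • e := by abel
    rw [harg, map_smul] at this
    have : |ρ (p + t • v + s • e) - ρ (p + t • v) - s * fderiv ℝ ρ p e| ≤
        1/(2*‖e‖) * ‖s • e‖ := by simpa [smul_eq_mul] using this
    rw [he, mul_one] at this
    have hne : ‖s • e‖ = |s| * ‖e‖ := by rw [norm_smul, Real.norm_eq_abs]
    rw [hne] at this
    calc |ρ (p + t • v + s • e) - τ t - s| =
        |ρ (p + t • v + s • e) - ρ (p + t • v) - s| := by rw [hτdef]
    _ ≤ 1/(2*‖e‖) * (|s| * ‖e‖) := this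
    _ = |s| / 2 := by field_simp
  have hOmem : ∀ s : ℝ, |s| ≤ σ → p + t • v + s • e ∈ O := by
    intro s hs
    have h1 : p + t • v + s • e ∈ Metric.ball p δ := hmem s hs
    have h2 : δ ≤ δ₃ := min_le_right _ _
    exact hball₃ (Metric.ball_subset_ball h2 h1)
  have hcont : ContinuousOn (fun s : ℝ => ρ (p + t • v + s • e)) (Set.Icc (-σ) σ) := by
    intro s hs
    have habs : |s| ≤ σ := abs_le.2 ⟨hs.1, hs.2⟩
    have hρc : ContinuousAt ρ (p + t • v + s • e) := (hρ _ (hOmem s habs)).continuousAt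
    have hf : ContinuousAt (fun s : ℝ => p + t • v + s • e) s := by fun_prop
    have hcmp := ContinuousAt.comp (g := ρ) (f := fun s : ℝ => p + t • v + s • e) hρc hf
    exact hcmp.continuousWithinAt
  -- endpoint signs
  have hσabs : |σ| ≤ σ := by rw [abs_of_nonneg hσ0]
  have hσabs' : |(-σ)| ≤ σ := by rw [abs_neg, abs_of_nonneg hσ0]
  have habsτ := abs_le.1 hCt
  have hup : 0 ≤ ρ (p + t • v + σ • e) := by
    have h1 := abs_le.1 (hest σ hσabs)
    rw [abs_of_nonneg hσ0] at h1
    have : σ = 4 * C * t ^ 2 := hσdef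
    nlinarith [h1.1, habsτ.1]
  have hdown : ρ (p + t • v + (-σ) • e) ≤ 0 := by
    have h1 := abs_le.1 (hest (-σ) hσabs')
    rw [abs_neg, abs_of_nonneg hσ0] at h1
    have : σ = 4 * C * t ^ 2 := hσdef
    nlinarith [h1.2, habsτ.2]
  -- IVT
  have hivt := intermediate_value_Icc (by linarith : (-σ:ℝ) ≤ σ) hcont
  have h0mem : (0:ℝ) ∈ Set.Icc (ρ (p + t • v + (-σ) • e)) (ρ (p + t • v + σ • e)) :=
    ⟨hdown, hup⟩
  obtain ⟨s, hsIcc, hs0⟩ := hivt h0mem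
  have hsabs : |s| ≤ σ := abs_le.2 ⟨hsIcc.1, hsIcc.2⟩
  refine ⟨p + t • v + s • e, hOmem s hsabs, hs0, ?_, ?_⟩
  · have heq : p + t • v - (p + t • v + s • e) = -(s • e) := by abel
    rw [heq, norm_neg, norm_smul, Real.norm_eq_abs]
    have h2 : |s| * ‖e‖ ≤ σ * ‖e‖ := mul_le_mul_of_nonneg_right hsabs hen.le
    have : σ * ‖e‖ = 4 * C * ‖e‖ * t ^ 2 := by rw [hσdef]; ring
    nlinarith [sq_nonneg t, mul_nonneg (norm_nonneg v) (sq_nonneg t)]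
  · have heq : p + t • v + s • e - p = t • v + s • e := by abel
    rw [heq]
    have h1 : ‖t • v + s • e‖ ≤ |t| * ‖v‖ + |s| * ‖e‖ := by
      refine (norm_add_le _ _).trans ?_
      rw [norm_smul, norm_smul, Real.norm_eq_abs, Real.norm_eq_abs]
    have h2 : |s| * ‖e‖ ≤ σ * ‖e‖ := mul_le_mul_of_nonneg_right hsabs hen.le
    have h3 : σ * ‖e‖ = 4 * C * ‖e‖ * t ^ 2 := by rw [hσdef]; ring
    nlinarith [sq_nonneg t, mul_nonneg (norm_nonneg v) (sq_nonneg t), abs_nonneg t,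
      mul_nonneg (mul_nonneg hC.le hen.le) (abs_nonneg t)]

open Filter Metric Complex

set_option maxHeartbeats 2000000 in
/-- Lower bound along the holomorphic disc: `‖F(p+tu)‖² + ‖F(p+t(iu))‖² ≥ 2 + c t²`. -/
lemma discLower {n N : ℕ} {Ω : Set (EuclideanSpace ℂ (Fin n))} (hΩopen : IsOpen Ω)
    {F : EuclideanSpace ℂ (Fin n) → EuclideanSpace ℂ (Fin N)} (hF : DifferentiableOn ℂ F Ω)
    {p : EuclideanSpace ℂ (Fin n)} (hpΩ : p ∈ Ω) (honep : ‖F p‖ = 1)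
    (hdiffp : fderiv ℝ (fun z => ‖F z‖ ^ 2) p = 0) (u : EuclideanSpace ℂ (Fin n))
    (hc : 0 < ‖(fderiv ℂ F p) u‖) :
    ∀ᶠ t in nhds (0:ℝ), 2 + ‖(fderiv ℂ F p) u‖ ^ 2 * t ^ 2 ≤
      ‖F (p + t • u)‖ ^ 2 + ‖F (p + t • (Complex.I • u))‖ ^ 2 := by
  set c : ℝ := ‖(fderiv ℂ F p) u‖ ^ 2 with hcdef
  have hc0 : 0 < c := by positivity
  have hFp : DifferentiableAt ℂ F p := hF.differentiableAt (hΩopen.mem_nhds hpΩ)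
  -- vanishing of the real inner product ⟪F p, dF w⟫ for every w
  have hvanp : ∀ w : EuclideanSpace ℂ (Fin n),
      (inner ℝ (F p) ((fderiv ℂ F p) w) : ℝ) = 0 := by
    intro w
    have hFR : DifferentiableAt ℝ F p := hFp.restrictScalars ℝ
    have h1 : HasFDerivAt (fun z => ‖F z‖ ^ 2)
        (2 • (innerSL ℝ (F p)).comp (fderiv ℝ F p)) p := hFR.hasFDerivAt.norm_sq
    have h2 := h1.fderiv
    rw [hdiffp] at h2
    have h3 := congrFun (congrArg DFunLike.coe h2) w
    simp only [ContinuousLinearMap.zero_apply, ContinuousLinearMap.smul_apply,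
      ContinuousLinearMap.comp_apply, innerSL_apply_apply, smul_eq_mul] at h3
    rw [hFp.fderiv_restrictScalars ℝ] at h3
    have h4 : (2:ℝ) * (inner ℝ (F p) ((fderiv ℂ F p) w) : ℝ) = 0 := by
      simpa using h3.symm
    linarith
  -- the holomorphic disc
  set L : ℂ →L[ℂ] EuclideanSpace ℂ (Fin n) := ContinuousLinearMap.smulRight (1 : ℂ →L[ℂ] ℂ) u
    with hLdef
  set g : ℂ → EuclideanSpace ℂ (Fin N) := fun w => F (p + w • u) with hgdef
  set V : Set ℂ := (fun w : ℂ => p + w • u) ⁻¹' Ω with hVdef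
  have hVopen : IsOpen V := by
    have : Continuous (fun w : ℂ => p + w • u) := by fun_prop
    exact hΩopen.preimage this
  have h0V : (0:ℂ) ∈ V := by simp [hVdef, hpΩ]
  have hgdV : DifferentiableOn ℂ g V := by
    intro w hw
    have h1 : DifferentiableAt ℂ F (p + w • u) := hF.differentiableAt (hΩopen.mem_nhds hw)
    have h2 : DifferentiableAt ℂ (fun w : ℂ => p + w • u) w := by
      have : DifferentiableAt ℂ (fun w : ℂ => w • u) w := (L.differentiableAt).congr_of_eventuallyEq
        (by filter_upwards with x; simp [hLdef])
      exact (this.const_add p)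
    exact (h1.comp w h2).differentiableWithinAt
  have hgan : AnalyticOnNhd ℂ g V := hgdV.analyticOnNhd hVopen
  set g1 : ℂ → EuclideanSpace ℂ (Fin N) := deriv g with hg1def
  have hg1an : AnalyticOnNhd ℂ g1 V := hgan.deriv
  have hg1d : ∀ w ∈ V, HasDerivAt g (g1 w) w := fun w hw => (hgan w hw).differentiableAt.hasDerivAt
  set g2 : EuclideanSpace ℂ (Fin N) := deriv g1 0 with hg2def
  have hg2d : HasDerivAt g1 g2 0 := (hg1an 0 h0V).differentiableAt.hasDerivAt
  -- identify g1 0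
  have hg10 : g1 0 = (fderiv ℂ F p) u := by
    have hdir : HasDerivAt g ((fderiv ℂ F p) u) 0 := by
      have haffd : HasDerivAt (fun w : ℂ => p + w • u) u 0 := by
        have h1 : HasDerivAt (fun w : ℂ => w • u) u 0 := by
          have := L.hasDerivAt (x := (0:ℂ))
          simp only [hLdef, ContinuousLinearMap.smulRight_apply, ContinuousLinearMap.one_apply,
            one_smul] at this
          exact this.congr_of_eventuallyEq (by filter_upwards with x; simp [hLdef])
        simpa using h1.const_add p
      have hF0 : HasFDerivAt F (fderiv ℂ F p) (p + (0:ℂ) • u) := by simpa using hFp.hasFDerivAt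
      exact hF0.comp_hasDerivAt 0 haffd
    exact (hg1d 0 h0V).unique hdir
  -- real curves
  set a : ℝ → EuclideanSpace ℂ (Fin N) := fun t => g (↑t) with hadef
  set b : ℝ → EuclideanSpace ℂ (Fin N) := fun t => g (Complex.I * ↑t) with hbdef
  have hofReal : ∀ t : ℝ, HasDerivAt (fun s : ℝ => (↑s : ℂ)) 1 t := by
    intro t
    have := (hasDerivAt_id t).ofReal_comp
    simpa using this
  have hβ : ∀ t : ℝ, HasDerivAt (fun s : ℝ => Complex.I * ↑s) Complex.I t := by
    intro t
    have := (hofReal t).const_mul Complex.I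
    simpa using this
  have hVevR : ∀ᶠ t : ℝ in nhds 0, (↑t : ℂ) ∈ V := by
    have hcont : Filter.Tendsto (fun t : ℝ => (↑t : ℂ)) (nhds 0) (nhds 0) := by
      have := Complex.continuous_ofReal.tendsto 0
      simpa using this
    exact hcont.eventually (hVopen.mem_nhds h0V)
  have hVevI : ∀ᶠ t : ℝ in nhds 0, Complex.I * (↑t : ℂ) ∈ V := by
    have hcont : Filter.Tendsto (fun t : ℝ => Complex.I * (↑t : ℂ)) (nhds 0) (nhds 0) := by
      have h1 : Continuous (fun t : ℝ => Complex.I * (↑t : ℂ)) := by fun_prop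
      have := h1.tendsto 0
      simpa using this
    exact hcont.eventually (hVopen.mem_nhds h0V)
  have ha : ∀ᶠ t : ℝ in nhds 0, HasDerivAt a (g1 ↑t) t := by
    filter_upwards [hVevR] with t ht
    have := (hg1d _ ht).scomp t (hofReal t)
    simpa [hadef, Function.comp_def] using this
  have hb : ∀ᶠ t : ℝ in nhds 0, HasDerivAt b (Complex.I • g1 (Complex.I * ↑t)) t := by
    filter_upwards [hVevI] with t ht
    have := (hg1d _ ht).scomp t (hβ t)
    simpa [hbdef, Function.comp_def] using this
  have ha0 : HasDerivAt a (g1 0) 0 := by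
    have := ha.self_of_nhds
    simpa using this
  have ha1 : HasDerivAt (fun t : ℝ => g1 ↑t) g2 0 := by
    have h1 : HasDerivAt g1 g2 ((fun s : ℝ => (↑s : ℂ)) 0) := by simpa using hg2d
    have := h1.scomp 0 (hofReal 0)
    simpa [Function.comp_def] using this
  have hb0 : HasDerivAt b (Complex.I • g1 0) 0 := by
    have := hb.self_of_nhds
    simpa using this
  have hb1 : HasDerivAt (fun t : ℝ => Complex.I • g1 (Complex.I * ↑t)) (Complex.I • (Complex.I • g2)) 0 := by
    have h1 : HasDerivAt g1 g2 ((fun s : ℝ => Complex.I * (↑s : ℂ)) 0) := by simpa using hg2d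
    have h2 := HasDerivAt.scomp (g₁ := g1) (h := fun s : ℝ => Complex.I * (↑s : ℂ)) 0 h1 (hβ 0)
    have h3 : HasDerivAt (fun t : ℝ => g1 (Complex.I * ↑t)) (Complex.I • g2) 0 := by
      simpa [Function.comp_def] using h2
    exact h3.const_smul Complex.I
  -- values at 0
  have ha0F : a 0 = F p := by simp [hadef, hgdef]
  have hb0F : b 0 = F p := by simp [hbdef, hgdef]
  -- the two real slice functions
  set x₁ : ℝ → ℝ := fun t => ‖F (p + t • u)‖ ^ 2 with hx₁def
  set x₂ : ℝ → ℝ := fun t => ‖F (p + t • (Complex.I • u))‖ ^ 2 with hx₂def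
  have haF : ∀ t : ℝ, a t = F (p + t • u) := by
    intro t
    simp only [hadef, hgdef, Complex.coe_smul]
  have hbF : ∀ t : ℝ, b t = F (p + t • (Complex.I • u)) := by
    intro t
    simp only [hbdef, hgdef]
    rw [mul_smul, Complex.coe_smul, smul_comm]
  have hx₁ : x₁ = fun t => (inner ℝ (a t) (a t) : ℝ) := by
    funext t
    rw [haF t, real_inner_self_eq_norm_sq]
  have hx₂ : x₂ = fun t => (inner ℝ (b t) (b t) : ℝ) := by
    funext t
    rw [hbF t, real_inner_self_eq_norm_sq]
  set d₁ : ℝ → ℝ := fun t => 2 * (inner ℝ (a t) (g1 ↑t) : ℝ) with hd₁def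
  set d₂ : ℝ → ℝ := fun t => 2 * (inner ℝ (b t) (Complex.I • g1 (Complex.I * ↑t)) : ℝ) with hd₂def
  have hx₁d : ∀ᶠ t in nhds (0:ℝ), HasDerivAt x₁ (d₁ t) t := by
    filter_upwards [ha] with t ht
    rw [hx₁, hd₁def]
    have h := HasDerivAt.inner ℝ (f := a) (g := a) ht ht
    refine h.congr_deriv ?_
    rw [real_inner_comm (a t) (g1 ↑t)]
    ring
  have hx₂d : ∀ᶠ t in nhds (0:ℝ), HasDerivAt x₂ (d₂ t) t := by
    filter_upwards [hb] with t ht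
    rw [hx₂, hd₂def]
    have h := HasDerivAt.inner ℝ (f := b) (g := b) ht ht
    refine h.congr_deriv ?_
    rw [real_inner_comm (b t) (Complex.I • g1 (Complex.I * ↑t))]
    ring
  have hd₁d : HasDerivAt d₁ (2 * ((inner ℝ (a 0) g2 : ℝ) + (inner ℝ (g1 0) (g1 0) : ℝ))) 0 := by
    have h := (HasDerivAt.inner ℝ (f := a) (g := fun t : ℝ => g1 ↑t) ha0 ha1).const_mul (2:ℝ)
    rw [hd₁def]
    refine h.congr_deriv ?_
    rw [Complex.ofReal_zero]
  have hd₂d : HasDerivAt d₂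
      (2 * ((inner ℝ (b 0) (Complex.I • (Complex.I • g2)) : ℝ)
        + (inner ℝ (Complex.I • g1 0) (Complex.I • g1 0) : ℝ))) 0 := by
    have h := (HasDerivAt.inner ℝ (f := b) (g := fun t : ℝ => Complex.I • g1 (Complex.I * ↑t))
      hb0 hb1).const_mul (2:ℝ)
    rw [hd₂def]
    refine h.congr_deriv ?_
    norm_num
  -- the comparison function
  set W : ℝ → ℝ := fun t => x₁ t + x₂ t - 2 - 2 * c * t ^ 2 with hWdef
  set W' : ℝ → ℝ := fun t => d₁ t + d₂ t - 4 * c * t with hW'def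
  have hW : ∀ᶠ t in nhds (0:ℝ), HasDerivAt W (W' t) t := by
    filter_upwards [hx₁d, hx₂d] with t h1 h2
    have hpoly : HasDerivAt (fun t : ℝ => 2 * c * t ^ 2) (4 * c * t) t := by
      have := (hasDerivAt_pow 2 t).const_mul (2*c)
      refine this.congr_deriv ?_
      push_cast
      ring
    have := ((h1.add h2).sub_const 2).sub hpoly
    exact this
  have hW0 : W 0 = 0 := by
    have h1 : x₁ 0 = 1 := by rw [hx₁def]; norm_num [honep]
    have h2 : x₂ 0 = 1 := by rw [hx₂def]; norm_num [honep]
    simp [hWdef, h1, h2]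
    norm_num
  have hW'0 : W' 0 = 0 := by
    have h1 : d₁ 0 = 0 := by
      have : g1 ((0:ℝ) : ℂ) = (fderiv ℂ F p) u := by rw [Complex.ofReal_zero, hg10]
      rw [hd₁def]
      simp only [ha0F, this, hvanp u, mul_zero]
    have h2 : d₂ 0 = 0 := by
      have hI : Complex.I • g1 (Complex.I * ((0:ℝ):ℂ)) = (fderiv ℂ F p) (Complex.I • u) := by
        rw [Complex.ofReal_zero, mul_zero, hg10, map_smul]
      rw [hd₂def]
      simp only [hb0F, hI, hvanp (Complex.I • u), mul_zero]
    simp [hW'def, h1, h2]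
  have hWA : HasDerivAt W' 0 0 := by
    have hlin : HasDerivAt (fun t : ℝ => 4 * c * t) (4 * c) 0 := by
      simpa using (hasDerivAt_id (0:ℝ)).const_mul (4*c)
    have hcomb := (hd₁d.add hd₂d).sub hlin
    have hval : 2 * ((inner ℝ (a 0) g2 : ℝ) + (inner ℝ (g1 0) (g1 0) : ℝ))
        + 2 * ((inner ℝ (b 0) (Complex.I • (Complex.I • g2)) : ℝ)
          + (inner ℝ (Complex.I • g1 0) (Complex.I • g1 0) : ℝ)) - 4 * c = 0 := by
      have e1 : (inner ℝ (g1 0) (g1 0) : ℝ) = c := by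
        rw [real_inner_self_eq_norm_sq, hg10, hcdef]
      have e2 : (inner ℝ (Complex.I • g1 0) (Complex.I • g1 0) : ℝ) = c := by
        rw [real_inner_self_eq_norm_sq, norm_smul, Complex.norm_I, one_mul, hg10, hcdef]
      have e3 : Complex.I • (Complex.I • g2) = -g2 := by
        rw [smul_smul, Complex.I_mul_I, neg_one_smul]
      have e4 : (inner ℝ (b 0) (Complex.I • (Complex.I • g2)) : ℝ)
          = -(inner ℝ (a 0) g2 : ℝ) := by
        rw [e3, inner_neg_right, hb0F, ha0F]
      rw [e1, e2, e4]
      ring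
    rw [hval] at hcomb
    exact hcomb
  have hquad := quadMVT hW hW0 hW'0 hWA hc0
  filter_upwards [hquad] with t ht
  have h1 : |W t| ≤ c * t ^ 2 := by simpa using ht
  have h2 := (abs_le.1 h1).1
  have : x₁ t + x₂ t - 2 - 2 * c * t ^ 2 ≥ -(c * t ^ 2) := h2
  have hfin : 2 + c * t ^ 2 ≤ x₁ t + x₂ t := by linarith
  simpa [hx₁def, hx₂def, hcdef] using hfin

open Filter Metric Set

/-- A nonzero real-linear functional on `ℂⁿ` (`n ≥ 2`) has a nonzero vector in the kernel of
both itself and its `i`-twist. -/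
lemma exists_complex_tangent {n : ℕ} (hn : 2 ≤ n) (ℓ : EuclideanSpace ℂ (Fin n) →L[ℝ] ℝ) :
    ∃ u : EuclideanSpace ℂ (Fin n), u ≠ 0 ∧ ℓ u = 0 ∧ ℓ (Complex.I • u) = 0 := by
  set E := EuclideanSpace ℂ (Fin n)
  let J : E →ₗ[ℝ] E :=
    { toFun := fun u => Complex.I • u
      map_add' := fun a b => smul_add _ a b
      map_smul' := fun c a => smul_comm _ c a }
  let T : E →ₗ[ℝ] ℝ × ℝ := LinearMap.prod (ℓ : E →ₗ[ℝ] ℝ) ((ℓ : E →ₗ[ℝ] ℝ).comp J)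
  have hfr : Module.finrank ℝ E = 2 * n := by
    have h1 : Module.finrank ℝ ℂ * Module.finrank ℂ E = Module.finrank ℝ E :=
      Module.finrank_mul_finrank ℝ ℂ E
    have h2 : Module.finrank ℂ E = n := finrank_euclideanSpace_fin
    rw [h2, Complex.finrank_real_complex] at h1
    omega
  have hT : ¬ Function.Injective T := by
    intro h
    have := LinearMap.finrank_le_finrank_of_injective h
    have h2 : Module.finrank ℝ (ℝ × ℝ) = 2 := by simp
    omega
  rw [Function.not_injective_iff] at hT
  obtain ⟨a, b, hab, hne⟩ := hT
  refine ⟨a - b, sub_ne_zero.2 hne, ?_, ?_⟩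
  · have := congrArg Prod.fst hab
    simp [T] at this ⊢
    simp [map_sub, this]
  · have := congrArg Prod.snd hab
    simp [T, J] at this ⊢
    rw [smul_sub, map_sub, this, sub_self]


set_option maxHeartbeats 10000000 in
/-- let `n ≥ 2`, `Ω ⊆ ℂ^n` open, `S ⊆ Ω` a connected smooth real-analytic
real hypersurface, and `F : Ω → ℂ^N` holomorphic with `‖F‖ = 1` on `S` and with the real
differential of `z ↦ ‖F z‖²` vanishing at every point of `S`.  Then at some point `p ∈ S`
the complex derivative `dF|_p` fails to be injective; in particular `F` is not a
holomorphic immersion near `S`. -/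
theorem not_immersion_of_degenerate_boundary {n N : ℕ} (hn : 2 ≤ n)
    (Ω S : Set (EuclideanSpace ℂ (Fin n))) (hΩopen : IsOpen Ω)
    (hS : IsRealAnalyticHypersurface Ω S) (hSconn : IsConnected S)
    (F : EuclideanSpace ℂ (Fin n) → EuclideanSpace ℂ (Fin N))
    (hF : DifferentiableOn ℂ F Ω)
    (hone : ∀ p ∈ S, ‖F p‖ = 1)
    (hdiff : ∀ p ∈ S, fderiv ℝ (fun z => ‖F z‖ ^ 2) p = 0) :
    ∃ p ∈ S, ¬ Function.Injective (fderiv ℂ F p) := by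
  by_contra hcon
  push_neg at hcon
  obtain ⟨hSΩ, hloc⟩ := hS
  obtain ⟨p₀, hp₀⟩ := hSconn.nonempty
  obtain ⟨O, hOopen, hp₀O, hOΩ, ρ, hρan, hρd, hSO⟩ := hloc p₀ hp₀
  obtain ⟨ε, hε, hball⟩ : ∃ ε > 0, Metric.closedBall p₀ (2*ε) ⊆ O := by
    obtain ⟨r, hr, h⟩ := Metric.isOpen_iff.1 hOopen p₀ hp₀O
    refine ⟨r/4, by positivity, fun x hx => h ?_⟩
    rw [Metric.mem_closedBall] at hx
    rw [Metric.mem_ball]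
    linarith
  set K : Set (EuclideanSpace ℂ (Fin n)) := S ∩ Metric.closedBall p₀ ε with hKdef
  have hKS : K ⊆ S := Set.inter_subset_left
  have hKO : K ⊆ O := fun q hq =>
    hball (Metric.closedBall_subset_closedBall (by linarith) hq.2)
  have hKρ : ∀ q ∈ K, ρ q = 0 := by
    intro q hq
    have : q ∈ S ∩ O := ⟨hq.1, hKO hq⟩
    rw [hSO] at this
    exact this.2
  have hclosed : IsClosed K := by
    refine isClosed_of_closure_subset fun q hq => ?_
    have hqball : q ∈ Metric.closedBall p₀ ε := by
      have h1 : closure K ⊆ closure (Metric.closedBall p₀ ε) :=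
        closure_mono Set.inter_subset_right
      have h2 := h1 hq
      rwa [IsClosed.closure_eq Metric.isClosed_closedBall] at h2
    have hqO : q ∈ O := hball (Metric.closedBall_subset_closedBall (by linarith) hqball)
    have hρcont : ContinuousAt ρ q := (hρan q hqO).continuousAt
    haveI hne : (nhdsWithin q K).NeBot := mem_closure_iff_nhdsWithin_neBot.1 hq
    have h1 : Filter.Tendsto ρ (nhdsWithin q K) (nhds (ρ q)) :=
      hρcont.continuousWithinAt.tendsto
    have h2 : Filter.Tendsto ρ (nhdsWithin q K) (nhds 0) := by
      refine Filter.Tendsto.congr' ?_ tendsto_const_nhds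
      filter_upwards [self_mem_nhdsWithin] with x hx
      exact (hKρ x hx).symm
    have hρq : ρ q = 0 := tendsto_nhds_unique h1 h2
    have hqS : q ∈ S := by
      have : q ∈ S ∩ O := by rw [hSO]; exact ⟨hqO, hρq⟩
      exact this.1
    exact ⟨hqS, hqball⟩
  have hKcomp : IsCompact K :=
    (isCompact_closedBall p₀ ε).of_isClosed_subset hclosed Set.inter_subset_right
  have hp₀K : p₀ ∈ K := ⟨hp₀, Metric.mem_closedBall_self hε.le⟩
  haveI : CompactSpace K := isCompact_iff_compactSpace.1 hKcomp
  -- inclusion bound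
  have hKΩ : ∀ (q : K) (h : EuclideanSpace ℂ (Fin n)), ‖h‖ ≤ ε → ↑q + h ∈ Ω := by
    intro q h hh
    refine hOΩ (hball ?_)
    rw [Metric.mem_closedBall, dist_eq_norm]
    have h1 : ‖(↑q + h) - p₀‖ ≤ ‖(↑q : EuclideanSpace ℂ (Fin n)) - p₀‖ + ‖h‖ := by
      have : (↑q + h) - p₀ = ((↑q : EuclideanSpace ℂ (Fin n)) - p₀) + h := by abel
      rw [this]; exact norm_add_le _ _
    have h2 : ‖(↑q : EuclideanSpace ℂ (Fin n)) - p₀‖ ≤ ε := by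
      have := q.2.2
      rwa [Metric.mem_closedBall, dist_eq_norm] at this
    linarith
  -- the closed pieces
  set δk : ℕ → ℝ := fun k => min ε (1/(k+1)) with hδkdef
  have hδkpos : ∀ k, 0 < δk k := fun k => lt_min hε (by positivity)
  have hδkε : ∀ k, δk k ≤ ε := fun k => min_le_left _ _
  set Cs : ℕ → ℕ → Set K := fun m k =>
    {q : K | ∀ h : EuclideanSpace ℂ (Fin n), ‖h‖ ≤ δk k →
      ‖F (↑q + h)‖^2 ≤ 1 + (1/(m+1)) * ‖h‖} with hCsdef
  have hCsclosed : ∀ m k, IsClosed (Cs m k) := by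
    intro m k
    have heq : Cs m k = ⋂ (h : EuclideanSpace ℂ (Fin n)) (_ : ‖h‖ ≤ δk k),
        {q : K | ‖F (↑q + h)‖^2 ≤ 1 + (1/(m+1)) * ‖h‖} := by
      ext q; simp [hCsdef, Set.mem_iInter]
    rw [heq]
    refine isClosed_iInter fun h => isClosed_iInter fun hh => ?_
    refine isClosed_le ?_ continuous_const
    have h1 : Continuous fun q : K => (↑q + h : EuclideanSpace ℂ (Fin n)) :=
      continuous_subtype_val.add continuous_const
    have h2 : Continuous fun q : K => F (↑q + h) :=
      hF.continuousOn.comp_continuous h1 (fun q => hKΩ q h (hh.trans (hδkε k)))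
    exact (h2.norm.pow 2)
  have hCscover : ∀ m, (⋃ k, Cs m k) = Set.univ := by
    intro m
    refine Set.eq_univ_of_forall fun q => ?_
    have hqS : ↑q ∈ S := q.2.1
    have hqΩ : ↑q ∈ Ω := hSΩ hqS
    have hdF : DifferentiableAt ℝ F ↑q :=
      (hF.differentiableAt (hΩopen.mem_nhds hqΩ)).restrictScalars ℝ
    have hr : HasFDerivAt (fun z => ‖F z‖^2) (0 : EuclideanSpace ℂ (Fin n) →L[ℝ] ℝ) ↑q := by
      have h1 := (DifferentiableAt.norm_sq (𝕜 := ℂ) hdF).hasFDerivAt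
      rwa [hdiff _ hqS] at h1
    have hm1 : (0:ℝ) < 1/(m+1) := by positivity
    have hlo := (hasFDerivAt_iff_isLittleO_nhds_zero.1 hr).def hm1
    obtain ⟨δ, hδ, hδball⟩ := Metric.eventually_nhds_iff.1 hlo
    obtain ⟨k, hk⟩ := exists_nat_one_div_lt hδ
    refine Set.mem_iUnion.2 ⟨k, ?_⟩
    intro h hh
    have hhδ : dist h 0 < δ := by
      rw [dist_zero_right]
      calc ‖h‖ ≤ δk k := hh
      _ ≤ 1/(k+1) := min_le_right _ _
      _ < δ := hk
    have := hδball hhδ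
    simp only [ContinuousLinearMap.zero_apply, sub_zero, Real.norm_eq_abs] at this
    have hq1 : ‖F ↑q‖^2 = 1 := by rw [hone _ hqS]; norm_num
    rw [hq1] at this
    have h2 := (abs_le.1 this).2
    have h3 : ‖h‖ = ‖h‖ := rfl
    linarith [h2]
  have hdense : Dense (⋂ m, ⋃ k, interior (Cs m k)) := by
    refine dense_iInter_of_isOpen (fun m => isOpen_iUnion fun k => isOpen_interior) ?_
    intro m
    exact dense_iUnion_interior_of_closed (hCsclosed m) (hCscover m)
  have hUopen : IsOpen ((Subtype.val : K → EuclideanSpace ℂ (Fin n)) ⁻¹'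
      (Metric.ball p₀ ε)) := (Metric.isOpen_ball).preimage continuous_subtype_val
  have hUne : ((Subtype.val : K → EuclideanSpace ℂ (Fin n)) ⁻¹'
      (Metric.ball p₀ ε)).Nonempty := ⟨⟨p₀, hp₀K⟩, by simp [hε]⟩
  obtain ⟨pp, hppG, hppU⟩ := hdense.exists_mem_open hUopen hUne
  set p : EuclideanSpace ℂ (Fin n) := ↑pp with hpdef
  have hpK : p ∈ K := pp.2
  have hpS : p ∈ S := hpK.1
  have hpO : p ∈ O := hKO hpK
  have hpΩ : p ∈ Ω := hOΩ hpO
  have hpball : dist p p₀ < ε := by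
    have := hppU
    simpa [hpdef] using this
  -- tangent vector and normal vector
  obtain ⟨u, hu0, hu1, hu2⟩ := exists_complex_tangent hn (fderiv ℝ ρ p)
  have hℓ : fderiv ℝ ρ p ≠ 0 := hρd p hpO
  obtain ⟨e₀, he₀⟩ : ∃ x, fderiv ℝ ρ p x ≠ 0 := by
    by_contra hno
    push_neg at hno
    exact hℓ (ContinuousLinearMap.ext fun x => by simp [hno x])
  set e : EuclideanSpace ℂ (Fin n) := (fderiv ℝ ρ p e₀)⁻¹ • e₀ with hedef
  have he : fderiv ℝ ρ p e = 1 := by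
    rw [hedef, map_smul, smul_eq_mul, inv_mul_cancel₀ he₀]
  have hρp : ρ p = 0 := hKρ p hpK
  -- nondegeneracy
  have hinj := hcon p hpS
  have hdu : (fderiv ℂ F p) u ≠ 0 := by
    intro h
    exact hu0 (hinj (by rw [h, map_zero]))
  set c : ℝ := ‖(fderiv ℂ F p) u‖^2 with hcdef
  have hc0 : 0 < c := by
    have := norm_pos_iff.2 hdu
    positivity
  -- lower bound along the disc
  have hlow := discLower hΩopen hF hpΩ (hone p hpS) (hdiff p hpS) u (norm_pos_iff.2 hdu)
  -- curves into S
  obtain ⟨Cu, hCu, hevu⟩ := curveToS hOopen hρan hpO hρp hu1 he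
  obtain ⟨Ci, hCi, hevi⟩ := curveToS hOopen hρan hpO hρp hu2 he
  set CC : ℝ := max Cu Ci with hCCdef
  have hCC : 0 < CC := lt_max_of_lt_left hCu
  -- choice of m
  obtain ⟨m, hm⟩ : ∃ m : ℕ, CC * (1/(m+1)) < c/2 := by
    obtain ⟨m, hm⟩ := exists_nat_gt (2*CC/c)
    refine ⟨m, ?_⟩
    have hm1 : (0:ℝ) < (m:ℝ)+1 := by positivity
    rw [mul_one_div, div_lt_iff₀ hm1]
    rw [div_lt_iff₀ hc0] at hm
    nlinarith
  -- the uniform neighborhood from Baire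
  have hppm : pp ∈ ⋃ k, interior (Cs m k) := Set.mem_iInter.1 hppG m
  obtain ⟨k, hk⟩ := Set.mem_iUnion.1 hppm
  obtain ⟨W, hWopen, hWeq⟩ := isOpen_induced_iff.1 (isOpen_interior (s := Cs m k))
  have hpW : p ∈ W := by
    rw [← hWeq] at hk
    exact hk
  obtain ⟨rW, hrW, hrWsub⟩ := Metric.isOpen_iff.1 hWopen p hpW
  -- eventual smallness
  have hεp : 0 < ε - dist p p₀ := by linarith
  have hsm1 : ∀ᶠ t in nhds (0:ℝ), CC * (|t| + t^2) < min rW (ε - dist p p₀) := by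
    have hcont : Filter.Tendsto (fun t : ℝ => CC * (|t| + t^2)) (nhds 0) (nhds 0) := by
      have h1 : Continuous (fun t : ℝ => CC * (|t| + t^2)) := by continuity
      have := h1.tendsto 0
      simpa using this
    exact hcont.eventually_lt_const (lt_min hrW hεp)
  have hsm2 : ∀ᶠ t in nhds (0:ℝ), CC * t^2 < δk k := by
    have hcont : Filter.Tendsto (fun t : ℝ => CC * t^2) (nhds 0) (nhds 0) := by
      have h1 : Continuous (fun t : ℝ => CC * t^2) := by continuity
      have := h1.tendsto 0
      simpa using this
    exact hcont.eventually_lt_const (hδkpos k)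
  -- the key upper bound, given a curve point
  have key : ∀ t : ℝ, t ≠ 0 → CC * (|t| + t^2) < min rW (ε - dist p p₀) → CC * t^2 < δk k →
      ∀ v q : EuclideanSpace ℂ (Fin n), q ∈ O → ρ q = 0 →
      ‖p + t • v - q‖ ≤ CC * t^2 → ‖q - p‖ ≤ CC * (|t| + t^2) →
      ‖F (p + t • v)‖^2 < 1 + (c/2) * t^2 := by
    intro t ht0 hsm1t hsm2t v q hqO hρq hd1 hd2
    have hqS : q ∈ S := by
      have : q ∈ S ∩ O := by rw [hSO]; exact ⟨hqO, hρq⟩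
      exact this.1
    have hqp : dist q p < min rW (ε - dist p p₀) := by
      rw [dist_eq_norm]
      exact lt_of_le_of_lt hd2 hsm1t
    have hqK : q ∈ K := by
      refine ⟨hqS, ?_⟩
      rw [Metric.mem_closedBall]
      have h1 : dist q p₀ ≤ dist q p + dist p p₀ := dist_triangle _ _ _
      have h2 : dist q p < ε - dist p p₀ := lt_of_lt_of_le hqp (min_le_right _ _)
      linarith
    have hqW : q ∈ W := hrWsub (by
      rw [Metric.mem_ball]
      exact lt_of_lt_of_le hqp (min_le_left _ _))
    have hqC : (⟨q, hqK⟩ : K) ∈ Cs m k := by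
      have : (⟨q, hqK⟩ : K) ∈ interior (Cs m k) := by
        rw [← hWeq]
        exact hqW
      exact interior_subset this
    have hbound := hqC (p + t • v - q) (by
      calc ‖p + t • v - q‖ ≤ CC * t^2 := hd1
      _ ≤ δk k := hsm2t.le)
    have harg : q + (p + t • v - q) = p + t • v := by abel
    rw [harg] at hbound
    have hm1 : (0:ℝ) < 1/((m:ℝ)+1) := by positivity
    have ht2 : 0 < t^2 := by positivity
    calc ‖F (p + t • v)‖^2 ≤ 1 + (1/(m+1)) * ‖p + t • v - q‖ := hbound
    _ ≤ 1 + (1/(m+1)) * (CC * t^2) := by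
        have := mul_le_mul_of_nonneg_left hd1 hm1.le
        linarith
    _ < 1 + (c/2) * t^2 := by
        have h1 : (1/((m:ℝ)+1)) * CC < c/2 := by
          rw [mul_comm]; exact hm
        nlinarith
  -- pick a small nonzero t
  have hbig := hlow.and ((hevu.and hevi).and (hsm1.and hsm2))
  have hbig' := hbig.filter_mono (nhdsWithin_le_nhds (s := {(0:ℝ)}ᶜ))
  haveI : (nhdsWithin (0:ℝ) {(0:ℝ)}ᶜ).NeBot := by infer_instance
  obtain ⟨t, ⟨hlowt, ⟨hut, hit⟩, hsm1t, hsm2t⟩, ht0⟩ := (hbig'.and self_mem_nhdsWithin).exists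
  have ht0' : t ≠ 0 := by simpa using ht0
  -- the two curve points
  obtain ⟨qu, hquO, hρqu, hqud1, hqud2⟩ := hut
  obtain ⟨qi, hqiO, hρqi, hqid1, hqid2⟩ := hit
  have hCuCC : Cu ≤ CC := le_max_left _ _
  have hCiCC : Ci ≤ CC := le_max_right _ _
  have habs : (0:ℝ) ≤ |t| + t^2 := by positivity
  have ht2 : (0:ℝ) ≤ t^2 := sq_nonneg t
  have hkeyu := key t ht0' hsm1t hsm2t u qu hquO hρqu
    (hqud1.trans (by nlinarith)) (hqud2.trans (by nlinarith))
  have hkeyi := key t ht0' hsm1t hsm2t (Complex.I • u) qi hqiO hρqi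
    (hqid1.trans (by nlinarith)) (hqid2.trans (by nlinarith))
  -- contradiction
  have ht2' : 0 < t^2 := by positivity
  nlinarith [hlowt, hkeyu, hkeyi]
end
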